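/- Let (A, H) be a matched pair of quasigroupoids and i^A, i^H the canonical inclusions into A⋈H. For all g ∈ H₁ and composable a, b ∈ A₁ with s_H(g) = t_A(a) and s_A(a) = t_A(b), the mixed associativity i^H(g)·(i^A(a)·i^A(b)) = (i^H(g)·i^A(a))·i^A(b) holds in A⋈H. -/
import Mathlib


/-- A quasigroupoid: objects `O`, arrows `A`, with a partial product `mul`
(meaningful on composable pairs, i.e. when `s a = t b`) and inverse map `inv`.
All axioms involving the product are guarded by composability hypotheses. -/
structure Quasigroupoid (O : Type*) (A : Type*) where
  s : A → O
  t : A → O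
  e : O → A
  inv : A → A
  mul : A → A → A
  s_e : ∀ x, s (e x) = x
  t_e : ∀ x, t (e x) = x
  e_mul : ∀ a, mul (e (t a)) a = a
  mul_e : ∀ a, mul a (e (s a)) = a
  s_mul : ∀ a b, s a = t b → s (mul a b) = s b
  t_mul : ∀ a b, s a = t b → t (mul a b) = t a
  inv_comp_left : ∀ a b, s a = t b → s (inv a) = t (mul a b)
  inv_mul_cancel : ∀ a b, s a = t b → mul (inv a) (mul a b) = b
  comp_inv_right : ∀ a b, s a = t b → s (mul a b) = t (inv b)
  mul_inv_cancel : ∀ a b, s a = t b → mul (mul a b) (inv b) = a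

/-- A matched pair of quasigroupoids with common base `O`:
a left action `φA` of `H` on `A` and a right action `φH` of `A` on `H`
satisfying the module conditions and the matched pair compatibilities. -/
structure IsMatchedPair {O A1 H1 : Type*} (A : Quasigroupoid O A1) (H : Quasigroupoid O H1)
    (φA : H1 → A1 → A1) (φH : H1 → A1 → H1) : Prop where
  t_act : ∀ h a, H.s h = A.t a → A.t (φA h a) = H.t h
  act_mul : ∀ g h a, H.s g = H.t h → H.s h = A.t a → φA (H.mul g h) a = φA g (φA h a)
  act_id : ∀ a, φA (H.e (A.t a)) a = a
  s_act : ∀ h a, H.s h = A.t a → H.s (φH h a) = A.s a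
  actH_mul : ∀ h a b, H.s h = A.t a → A.s a = A.t b → φH h (A.mul a b) = φH (φH h a) b
  actH_id : ∀ h, φH h (A.e (H.s h)) = h
  compat_st : ∀ h a, H.s h = A.t a → A.s (φA h a) = H.t (φH h a)
  compat_mulA : ∀ h a b, H.s h = A.t a → A.s a = A.t b →
    φA h (A.mul a b) = A.mul (φA h a) (φA (φH h a) b)
  compat_mulH : ∀ g h a, H.s g = H.t h → H.s h = A.t a →
    φH (H.mul g h) a = H.mul (φH g (φA h a)) (φH h a)

variable {O A1 H1 : Type*}

/-- The canonical inclusion of `A` into the arrows of `A ⋈ H` (first component). -/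
def incA (A : Quasigroupoid O A1) (H : Quasigroupoid O H1) (a : A1) : A1 × H1 :=
  (a, H.e (A.s a))

/-- The canonical inclusion of `H` into the arrows of `A ⋈ H` (second component). -/
def incH (A : Quasigroupoid O A1) (H : Quasigroupoid O H1) (g : H1) : A1 × H1 :=
  (A.e (H.t g), g)

/-- The double cross product `(a,g)·(b,h) = (a • φA(g,b), φH(g,b) ⋆ h)` of `A ⋈ H`
(the formula defining the product of `A ⋈ H` on composable pairs). -/
def dcpMul (A : Quasigroupoid O A1) (H : Quasigroupoid O H1)
    (φA : H1 → A1 → A1) (φH : H1 → A1 → H1) (p q : A1 × H1) : A1 × H1 :=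
  (A.mul p.1 (φA p.2 q.1), H.mul (φH p.2 q.1) q.2)


namespace Quasigroupoid

theorem mul_inv_self (Q : Quasigroupoid O A1) (Y : A1) :
    Q.mul Y (Q.inv Y) = Q.e (Q.t Y) := by
  have h := Q.mul_inv_cancel (Q.e (Q.t Y)) Y (Q.s_e _)
  rwa [Q.e_mul] at h

theorem eq_e_of_mul_eq (Q : Quasigroupoid O A1) (X Y : A1)
    (hs : Q.s X = Q.t Y) (h : Q.mul X Y = Y) : X = Q.e (Q.t Y) := by
  have h2 := Q.mul_inv_cancel X Y hs
  rw [h, Q.mul_inv_self] at h2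
  exact h2.symm

end Quasigroupoid

theorem actH_e (A : Quasigroupoid O A1) (H : Quasigroupoid O H1)
    (φA : H1 → A1 → A1) (φH : H1 → A1 → H1)
    (hmp : IsMatchedPair A H φA φH) (b : A1) :
    φH (H.e (A.t b)) b = H.e (A.s b) := by
  set Y := φH (H.e (A.t b)) b with hY
  have hse : H.s (H.e (A.t b)) = A.t b := H.s_e _
  have sY : H.s Y = A.s b := hmp.s_act _ b hse
  have tY : H.t Y = A.s b := by
    have := hmp.compat_st (H.e (A.t b)) b hse
    rw [hmp.act_id b] at this
    exact this.symm
  have main : H.mul Y Y = Y := by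
    have hc := hmp.compat_mulH (H.e (A.t b)) (H.e (A.t b)) b (by rw [H.s_e, H.t_e]) hse
    have hee : H.mul (H.e (A.t b)) (H.e (A.t b)) = H.e (A.t b) := by
      have := H.e_mul (H.e (A.t b)); rwa [H.t_e] at this
    rw [hee, hmp.act_id b] at hc
    exact hc.symm
  have := H.eq_e_of_mul_eq Y Y (sY.trans tY.symm) main
  rw [tY] at this
  exact this

/-- Mixed associativity `i^H(g)·(i^A(a)·i^A(b)) = (i^H(g)·i^A(a))·i^A(b)` in `A ⋈ H`. -/
theorem mixed_assoc_HAA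
    (A : Quasigroupoid O A1) (H : Quasigroupoid O H1)
    (φA : H1 → A1 → A1) (φH : H1 → A1 → H1)
    (hmp : IsMatchedPair A H φA φH)
    (g : H1) (a b : A1) (h1 : H.s g = A.t a) (h2 : A.s a = A.t b) :
    dcpMul A H φA φH (incH A H g) (dcpMul A H φA φH (incA A H a) (incA A H b)) =
      dcpMul A H φA φH (dcpMul A H φA φH (incH A H g) (incA A H a)) (incA A H b) := by
  have esa : H.e (A.s a) = H.e (A.t b) := by rw [h2]
  simp only [dcpMul, incA, incH]
  rw [esa, hmp.act_id b, actH_e A H φA φH hmp b]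
  have sab : A.s (A.mul a b) = A.s b := A.s_mul a b h2
  have tab : A.t (A.mul a b) = A.t a := A.t_mul a b h2
  have tga : A.t (φA g a) = H.t g := hmp.t_act g a h1
  have sga : H.s (φH g a) = A.s a := hmp.s_act g a h1
  have tGab : A.t (φA g (A.mul a b)) = H.t g := hmp.t_act g _ (h1.trans tab.symm)
  have hee : H.mul (H.e (A.s b)) (H.e (A.s b)) = H.e (A.s b) := by
    have := H.e_mul (H.e (A.s b)); rwa [H.t_e] at this
  have hga : H.mul (φH g a) (H.e (A.t b)) = φH g a := by
    rw [← h2, ← sga]; exact H.mul_e _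
  rw [hee, hga]
  congr 1
  · rw [show A.mul (A.e (H.t g)) (φA g (A.mul a b)) = φA g (A.mul a b) by
      rw [← tGab]; exact A.e_mul _]
    rw [show A.mul (A.e (H.t g)) (φA g a) = φA g a by rw [← tga]; exact A.e_mul _]
    exact hmp.compat_mulA g a b h1 h2
  · rw [show H.mul (φH g (A.mul a b)) (H.e (A.s b)) = φH g (A.mul a b) by
      rw [show A.s b = H.s (φH g (A.mul a b)) by rw [hmp.s_act g _ (h1.trans tab.symm), sab]]
      exact H.mul_e _]
    rw [show H.mul (φH (φH g a) b) (H.e (A.s b)) = φH (φH g a) b by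
      rw [show A.s b = H.s (φH (φH g a) b) from (hmp.s_act _ b (sga.trans h2)).symm]
      exact H.mul_e _]
    exact hmp.actH_mul g a b h1 h2
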